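/- Let e_0, e_1, …, e_n ∈ ℤ^n be vectors such that for every k ∈ {0, …, n} the family (e_j)_{j ≠ k} is linearly independent over ℚ. Let a_0, …, a_n be positive integers and assume the following Cartier-type condition: for every i ∈ {0, …, n} and every k ≠ i there exists a ℤ-linear map φ : ℤ^n → ℤ with φ(e_i) = a_i and φ(e_j) = 0 for all j ∉ {i, k}. Let I ⊊ {0, …, n} be a proper subset and let v ∈ ℤ^n be such that v = Σ_{i ∈ I} b_i e_i with b_i ∈ ℚ, b_i > 0 for all i ∈ I. Then for every i ∈ I the number a_i b_i is a positive integer, i.e. v = Σ_{i ∈ I} (m_i / a_i) e_i with m_i ∈ ℤ_{>0}. (Lattice-theoretic form of Lemma 2.2: on a ℚ-factorial toric variety of Picard number one with ray generators e_0, …, e_n, the integer a_i is the least positive integer such that a_i D_{e_i} is Cartier, and the Cartier-type condition expresses local principality of a_i D_{e_i} on each maximal affine chart.) -/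

import Mathlib

/-- Lattice-theoretic form of Lemma 2.2: `e 0, …, e n ∈ ℤ^n` such that any `n` of them are
linearly independent over `ℚ`, `a i` positive integers satisfying the Cartier-type condition.
If `I` is a proper subset of `{0, …, n}` and `v ∈ ℤ^n` with `v = ∑_{i ∈ I} b i • e i`,
`b i ∈ ℚ`, `b i > 0`, then `a i * b i` is a positive integer for every `i ∈ I`. -/
theorem stmt_7 (n : ℕ) (e : Fin (n + 1) → (Fin n → ℤ)) (a : Fin (n + 1) → ℤ)
    (ha : ∀ i, 0 < a i)
    (hind : ∀ k : Fin (n + 1),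
      LinearIndependent ℚ (fun j : {j : Fin (n + 1) // j ≠ k} =>
        (fun i => (e j i : ℚ) : Fin n → ℚ)))
    (hcartier : ∀ i k : Fin (n + 1), k ≠ i →
      ∃ φ : (Fin n → ℤ) →ₗ[ℤ] ℤ, φ (e i) = a i ∧ ∀ j, j ≠ i → j ≠ k → φ (e j) = 0)
    (I : Finset (Fin (n + 1))) (hI : I ≠ Finset.univ)
    (v : Fin n → ℤ) (b : Fin (n + 1) → ℚ) (hb : ∀ i ∈ I, 0 < b i)
    (hv : (fun i => (v i : ℚ)) = ∑ i ∈ I, b i • (fun j => (e i j : ℚ))) :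
    ∀ i ∈ I, ∃ m : ℤ, 0 < m ∧ (a i : ℚ) * b i = (m : ℚ) := by
  intro i hi
  obtain ⟨k, hk⟩ : ∃ k, k ∉ I := by
    by_contra h
    push_neg at h
    exact hI (Finset.eq_univ_iff_forall.2 h)
  have hki : k ≠ i := fun h => hk (h ▸ hi)
  obtain ⟨φ, hφi, hφ0⟩ := hcartier i k hki
  set c : Fin n → ℤ := fun t => φ (Pi.single t 1) with hc
  have hφ : ∀ w : Fin n → ℤ, φ w = ∑ t, w t * c t := by
    intro w
    have hw : w = ∑ t, w t • Pi.single t (1 : ℤ) := by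
      ext s
      simp [Pi.single_apply, Finset.sum_apply]
    conv_lhs => rw [hw]
    rw [map_sum]
    simp only [map_smul, smul_eq_mul, hc]
  -- the ℚ-linear extension of φ
  set L : (Fin n → ℚ) →ₗ[ℚ] ℚ := ∑ t, (c t : ℚ) • LinearMap.proj t with hLdef
  have hL : ∀ w : Fin n → ℚ, L w = ∑ t, (c t : ℚ) * w t := by
    intro w
    simp [hLdef, LinearMap.sum_apply, smul_eq_mul]
  have key : ∀ w : Fin n → ℤ, L (fun s => (w s : ℚ)) = (φ w : ℚ) := by
    intro w
    rw [hL, hφ w]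
    push_cast
    exact Finset.sum_congr rfl fun t _ => mul_comm _ _
  have h1 : L (fun s => (v s : ℚ)) = (φ v : ℚ) := key v
  have h2 : L (fun s => (v s : ℚ)) = b i * (a i : ℚ) := by
    rw [hv, map_sum]
    rw [Finset.sum_eq_single i]
    · rw [map_smul, key (e i), hφi]
      simp [smul_eq_mul]
    · intro j hj hji
      have hjk : j ≠ k := fun h => hk (h ▸ hj)
      rw [map_smul, key (e j), hφ0 j hji hjk]
      simp
    · intro h
      exact absurd hi h
  have heq : (a i : ℚ) * b i = ((φ v : ℤ) : ℚ) := by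
    rw [← h1, h2, mul_comm]
  refine ⟨φ v, ?_, heq⟩
  have hpos : (0 : ℚ) < (a i : ℚ) * b i :=
    mul_pos (by exact_mod_cast ha i) (hb i hi)
  rw [heq] at hpos
  exact_mod_cast hpos
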